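/- For all integers r ≥ 2, for all n ≥ 0, the set of partitions of n with at most r−1 successive Durfee squares and whose vertical Durfee dissection property holds (A_{r,r}(n)), minus the subset A''_r(n), equals D_{r,r}(n) minus D_{r,r−1}(n); equivalently, A''_r(n) = D_{r,r−1}(n), where A''_r(n) is the union of A_{r−1,r−1}(n) with the set of partitions of n with exactly r−1 successive Durfee squares such that for at least one j, the part λ_{n_1+…+n_j} in row equal to the bottom of the j-th Durfee square strictly exceeds n_j (the size of that square). -/

import Mathlib

/-- A partition of `n`: a non-increasing list of positive integers summing to `n`. -/
def IsPartitionOf (n : ℕ) (l : List ℕ) : Prop :=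
  l.Pairwise (· ≥ ·) ∧ (∀ x ∈ l, 0 < x) ∧ l.sum = n

/-- The size of the Durfee square of a partition (given as a list of parts):
the largest `k` such that the first `k` parts are all `≥ k`. -/
def durfSq (l : List ℕ) : ℕ :=
  Nat.findGreatest (fun k => k ≤ l.length ∧ ∀ j < k, k ≤ l.getD j 0) l.length

/-- The parameter `k` of the horizontal Durfee rectangle (`k` columns, `k − 1` rows):
the largest `k` with `k − 1 ≤` the number of parts and the first `k − 1` parts all `≥ k`.
A `1 × 0` rectangle (`k = 1`) is always allowed. -/
def durfRectH (l : List ℕ) : ℕ :=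
  Nat.findGreatest (fun k => k - 1 ≤ l.length ∧ ∀ j < k - 1, k ≤ l.getD j 0) (l.length + 1)

/-- Remove `m` successive Durfee squares from the top of the partition. -/
def sqSteps : ℕ → List ℕ → List ℕ
  | 0, l => l
  | m + 1, l => sqSteps m (l.drop (durfSq l))

/-- Remove `m` successive horizontal Durfee rectangles from the top of the partition. -/
def rectSteps : ℕ → List ℕ → List ℕ
  | 0, l => l
  | m + 1, l => rectSteps m (l.drop (durfRectH l - 1))


section Helpers

lemma durfSq_spec (l : List ℕ) :
    durfSq l ≤ l.length ∧ ∀ j < durfSq l, durfSq l ≤ l.getD j 0 :=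
  Nat.findGreatest_spec (P := fun k => k ≤ l.length ∧ ∀ j < k, k ≤ l.getD j 0)
    (m := 0) (Nat.zero_le _) ⟨Nat.zero_le _, by omega⟩

lemma durfSq_le_length (l : List ℕ) : durfSq l ≤ l.length := (durfSq_spec l).1

lemma le_durfSq {l : List ℕ} {k : ℕ} (h1 : k ≤ l.length) (h2 : ∀ j < k, k ≤ l.getD j 0) :
    k ≤ durfSq l := Nat.le_findGreatest h1 ⟨h1, h2⟩

lemma durfRectH_spec (l : List ℕ) :
    durfRectH l - 1 ≤ l.length ∧ ∀ j < durfRectH l - 1, durfRectH l ≤ l.getD j 0 :=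
  Nat.findGreatest_spec (P := fun k => k - 1 ≤ l.length ∧ ∀ j < k - 1, k ≤ l.getD j 0)
    (m := 0) (Nat.zero_le _) ⟨Nat.zero_le _, by omega⟩

lemma le_durfRectH {l : List ℕ} {k : ℕ} (h1 : k - 1 ≤ l.length)
    (h2 : ∀ j < k - 1, k ≤ l.getD j 0) (h3 : k ≤ l.length + 1) :
    k ≤ durfRectH l := Nat.le_findGreatest h3 ⟨h1, h2⟩

lemma one_le_durfRectH (l : List ℕ) : 1 ≤ durfRectH l :=
  le_durfRectH (by simp) (by omega) (by omega)

lemma getD_anti {l : List ℕ} (hs : l.Pairwise (· ≥ ·)) {i j : ℕ} (hij : i ≤ j)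
    (hj : j < l.length) : l.getD j 0 ≤ l.getD i 0 := by
  rw [List.getD_eq_getElem _ _ hj, List.getD_eq_getElem _ _ (lt_of_le_of_lt hij hj)]
  rcases eq_or_lt_of_le hij with rfl | h
  · exact le_refl _
  · exact hs.rel_get_of_lt (a := ⟨i, lt_of_le_of_lt hij hj⟩) (b := ⟨j, hj⟩) h

lemma durfSq_pos {l : List ℕ} (hl : l ≠ []) (hpos : ∀ x ∈ l, 0 < x) : 1 ≤ durfSq l := by
  have hlen : 0 < l.length := List.length_pos_iff.2 hl
  refine le_durfSq hlen fun j hj => ?_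
  interval_cases j
  rw [List.getD_eq_getElem _ _ hlen]
  exact hpos _ (List.getElem_mem hlen)

lemma sqSteps_nil (t : ℕ) : sqSteps t [] = [] := by
  induction t with
  | zero => rfl
  | succ t ih => simpa [sqSteps] using ih

lemma sqSteps_succ_last (t : ℕ) (l : List ℕ) :
    sqSteps (t + 1) l = (sqSteps t l).drop (durfSq (sqSteps t l)) := by
  induction t generalizing l with
  | zero => rfl
  | succ t ih =>
      rw [show sqSteps (t + 2) l = sqSteps (t + 1) (l.drop (durfSq l)) from rfl, ih,
        show sqSteps (t + 1) l = sqSteps t (l.drop (durfSq l)) from rfl]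

lemma sqSteps_eq_nil_succ {t : ℕ} {l : List ℕ} (h : sqSteps t l = []) :
    sqSteps (t + 1) l = [] := by
  rw [sqSteps_succ_last, h]; rfl

lemma getD_durfSq_pred_ge {l : List ℕ} (hl : l ≠ []) (hpos : ∀ x ∈ l, 0 < x) :
    durfSq l ≤ l.getD (durfSq l - 1) 0 := by
  have h1 := durfSq_pos hl hpos
  exact (durfSq_spec l).2 _ (by omega)

lemma durfRectH_le {l : List ℕ} : durfRectH l ≤ durfSq l + 1 := by
  by_contra h
  push_neg at h
  set d := durfSq l with hd
  obtain ⟨h1, h2⟩ := durfRectH_spec l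
  have hk : d + 1 ≤ durfSq l := le_durfSq (by omega)
    (fun j hj => le_trans (by omega) (h2 j (by omega)))
  omega

lemma durfSq_le_durfRectH {l : List ℕ} : durfSq l ≤ durfRectH l := by
  refine le_durfRectH (by have := durfSq_le_length l; omega)
    (fun j hj => (durfSq_spec l).2 j (by omega)) (by have := durfSq_le_length l; omega)

lemma durfRectH_of_gt {l : List ℕ} (hs : l.Pairwise (· ≥ ·)) (hl : l ≠ [])
    (hpos : ∀ x ∈ l, 0 < x) (h : durfSq l < l.getD (durfSq l - 1) 0) :
    durfRectH l = durfSq l + 1 := by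
  have hd1 := durfSq_pos hl hpos
  have hdl := durfSq_le_length l
  refine le_antisymm durfRectH_le (le_durfRectH (by omega) (fun j hj => ?_) (by omega))
  have : l.getD (durfSq l - 1) 0 ≤ l.getD j 0 := getD_anti hs (by omega) (by omega)
  omega

lemma durfRectH_of_eq {l : List ℕ} (hl : l ≠ []) (hpos : ∀ x ∈ l, 0 < x)
    (h : l.getD (durfSq l - 1) 0 = durfSq l) : durfRectH l = durfSq l := by
  have hd1 := durfSq_pos hl hpos
  refine le_antisymm ?_ durfSq_le_durfRectH
  by_contra hc
  push_neg at hc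
  have heq : durfRectH l = durfSq l + 1 := by have := @durfRectH_le l; omega
  obtain ⟨h1, h2⟩ := durfRectH_spec l
  have := h2 (durfSq l - 1) (by omega)
  omega

/-- Parts below the Durfee square are at most its size. -/
lemma drop_durfSq_le {l : List ℕ} (hs : l.Pairwise (· ≥ ·)) :
    ∀ x ∈ l.drop (durfSq l), x ≤ durfSq l := by
  intro x hx
  set d := durfSq l with hd
  have hdl : d ≤ l.length := durfSq_le_length l
  rcases eq_or_lt_of_le hdl with he | hlt
  · rw [List.drop_eq_nil_of_le (le_of_eq he.symm)] at hx
    exact absurd hx List.not_mem_nil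
  · -- ¬ P (d+1)
    have hng : ¬ (d + 1 ≤ l.length ∧ ∀ j < d + 1, d + 1 ≤ l.getD j 0) :=
      Nat.findGreatest_is_greatest (P := fun k => k ≤ l.length ∧ ∀ j < k, k ≤ l.getD j 0)
        (n := l.length) (show durfSq l < d + 1 by omega) (by omega)
    push_neg at hng
    obtain ⟨j, hj, hjv⟩ := hng (by omega)
    have hdj : l.getD d 0 ≤ l.getD j 0 := getD_anti hs (by omega) hlt
    obtain ⟨i, hi, hix⟩ := List.mem_iff_getElem.1 hx
    rw [List.getElem_drop] at hix
    have hilen : d + i < l.length := by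
      have := @List.length_drop _ d l
      omega
    have : l.getD (d + i) 0 = x := by
      rw [List.getD_eq_getElem _ _ hilen]
      exact hix
    have hmono : l.getD (d + i) 0 ≤ l.getD d 0 := getD_anti hs (by omega)
      (by have := @List.length_drop _ d l; omega)
    omega

lemma durfRectH_le_of_bdd {d : ℕ} {rest : List ℕ} (hd : 1 ≤ d)
    (hrest : ∀ x ∈ rest, x ≤ d) : durfRectH rest ≤ d := by
  by_contra hc
  push_neg at hc
  obtain ⟨h1, h2⟩ := durfRectH_spec rest
  have h0 : durfRectH rest ≤ rest.getD 0 0 := h2 0 (by omega)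
  have hmem : rest.getD 0 0 ∈ rest := by
    rw [List.getD_eq_getElem _ _ (by omega)]
    exact List.getElem_mem (by omega)
  have := hrest _ hmem
  omega

lemma durfSq_cons {d : ℕ} {rest : List ℕ} (hd : 1 ≤ d)
    (hrest : ∀ x ∈ rest, x ≤ d) : durfSq (d :: rest) = durfRectH rest := by
  have hc := durfRectH_le_of_bdd hd hrest
  have hc1 := one_le_durfRectH rest
  obtain ⟨hr1, hr2⟩ := durfRectH_spec rest
  refine le_antisymm ?_ ?_
  · -- durfSq (d :: rest) ≤ durfRectH rest
    obtain ⟨hs1, hs2⟩ := durfSq_spec (d :: rest)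
    refine le_durfRectH ?_ (fun j hj => ?_) ?_
    · simp at hs1; omega
    · have := hs2 (j + 1) (by omega)
      rwa [List.getD_cons_succ] at this
    · simp at hs1 ⊢; omega
  · -- durfRectH rest ≤ durfSq (d :: rest)
    refine le_durfSq (by simp; omega) (fun j hj => ?_)
    cases j with
    | zero => rw [List.getD_cons_zero]; omega
    | succ i =>
        rw [List.getD_cons_succ]
        exact hr2 i (by omega)

lemma main_iff : ∀ N : ℕ, ∀ l : List ℕ, l.length ≤ N → l.Pairwise (· ≥ ·) →
    (∀ x ∈ l, 0 < x) → ∀ t : ℕ,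
    (sqSteps t (l.drop (durfRectH l - 1)) = [] ↔
      (sqSteps t l = [] ∨ (sqSteps (t + 1) l = [] ∧ sqSteps t l ≠ [] ∧
        ∃ j, 1 ≤ j ∧ j ≤ t + 1 ∧ durfSq (sqSteps (j - 1) l) <
          (sqSteps (j - 1) l).getD (durfSq (sqSteps (j - 1) l) - 1) 0))) := by
  intro N
  induction N with
  | zero =>
      intro l hlen hs hpos t
      have : l = [] := List.length_eq_zero_iff.1 (by omega)
      subst this
      simp [List.drop_nil, sqSteps_nil]
  | succ N ih =>
      intro l hlen hs hpos t
      rcases eq_or_ne l [] with rfl | hl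
      · simp [List.drop_nil, sqSteps_nil]
      · have hd1 : 1 ≤ durfSq l := durfSq_pos hl hpos
        have hdl : durfSq l ≤ l.length := durfSq_le_length l
        have hrest_s : (l.drop (durfSq l)).Pairwise (· ≥ ·) :=
          List.Pairwise.sublist (List.drop_sublist _ l) hs
        have hrest_pos : ∀ x ∈ l.drop (durfSq l), 0 < x :=
          fun x hx => hpos x (List.mem_of_mem_drop hx)
        have hrest_len : (l.drop (durfSq l)).length ≤ N := by
          rw [List.length_drop]; omega
        have hrest_le : ∀ x ∈ l.drop (durfSq l), x ≤ durfSq l := drop_durfSq_le hs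
        have hbot : durfSq l ≤ l.getD (durfSq l - 1) 0 := getD_durfSq_pred_ge hl hpos
        rcases eq_or_lt_of_le hbot with heq | hgt
        · -- bottom part equals the Durfee square size
          have hR : durfRectH l = durfSq l := durfRectH_of_eq hl hpos heq.symm
          have hm : l.drop (durfRectH l - 1) = durfSq l :: l.drop (durfSq l) := by
            rw [hR, List.drop_eq_getElem_cons (show durfSq l - 1 < l.length by omega)]
            congr 1
            · rw [← List.getD_eq_getElem l 0 (show durfSq l - 1 < l.length by omega)]
              exact heq.symm
            · congr 1
              omega
          have hsq : durfSq (durfSq l :: l.drop (durfSq l)) = durfRectH (l.drop (durfSq l)) :=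
            durfSq_cons hd1 hrest_le
          have hP1 : ¬ durfSq (sqSteps (1 - 1) l) <
              (sqSteps (1 - 1) l).getD (durfSq (sqSteps (1 - 1) l) - 1) 0 := by
            have e : sqSteps (1 - 1) l = l := rfl
            rw [e]
            omega
          rw [hm]
          cases t with
          | zero =>
              constructor
              · intro h0
                exact absurd h0 (List.cons_ne_nil _ _)
              · rintro (h0 | ⟨-, -, j, hj1, hj2, hjP⟩)
                · exact absurd h0 hl
                · have : j = 1 := by omega
                  subst this
                  exact absurd hjP hP1
          | succ u =>
              have hc1 : 1 ≤ durfRectH (l.drop (durfSq l)) := one_le_durfRectH _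
              have hstep : sqSteps (u + 1) (durfSq l :: l.drop (durfSq l)) =
                  sqSteps u ((l.drop (durfSq l)).drop (durfRectH (l.drop (durfSq l)) - 1)) := by
                show sqSteps u ((durfSq l :: l.drop (durfSq l)).drop
                    (durfSq (durfSq l :: l.drop (durfSq l)))) = _
                obtain ⟨c, hc⟩ : ∃ c, durfRectH (l.drop (durfSq l)) = c + 1 :=
                  ⟨durfRectH (l.drop (durfSq l)) - 1, by omega⟩
                rw [hsq, hc, List.drop_succ_cons]
                simp
              rw [hstep, ih (l.drop (durfSq l)) hrest_len hrest_s hrest_pos u]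
              have e1 : sqSteps (u + 1) l = sqSteps u (l.drop (durfSq l)) := rfl
              have e2 : sqSteps (u + 1 + 1) l = sqSteps (u + 1) (l.drop (durfSq l)) := rfl
              rw [e1, e2]
              have hex : (∃ j, 1 ≤ j ∧ j ≤ u + 1 ∧
                  durfSq (sqSteps (j - 1) (l.drop (durfSq l))) <
                    (sqSteps (j - 1) (l.drop (durfSq l))).getD
                      (durfSq (sqSteps (j - 1) (l.drop (durfSq l))) - 1) 0) ↔
                  (∃ j, 1 ≤ j ∧ j ≤ u + 1 + 1 ∧
                  durfSq (sqSteps (j - 1) l) <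
                    (sqSteps (j - 1) l).getD (durfSq (sqSteps (j - 1) l) - 1) 0) := by
                constructor
                · rintro ⟨j, hj1, hj2, hjP⟩
                  refine ⟨j + 1, by omega, by omega, ?_⟩
                  have e : sqSteps (j + 1 - 1) l = sqSteps (j - 1) (l.drop (durfSq l)) := by
                    rw [show j + 1 - 1 = (j - 1) + 1 by omega]
                    rfl
                  rw [e]
                  exact hjP
                · rintro ⟨j, hj1, hj2, hjP⟩
                  rcases eq_or_ne j 1 with rfl | hj
                  · exact absurd hjP hP1
                  · refine ⟨j - 1, by omega, by omega, ?_⟩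
                    have e : sqSteps (j - 1) l = sqSteps (j - 1 - 1) (l.drop (durfSq l)) := by
                      rw [show j - 1 = (j - 1 - 1) + 1 by omega]
                      rfl
                    rw [e] at hjP
                    exact hjP
              rw [hex]
        · -- bottom part exceeds the Durfee square size
          have hR : durfRectH l = durfSq l + 1 := durfRectH_of_gt hs hl hpos hgt
          have hm : l.drop (durfRectH l - 1) = l.drop (durfSq l) := by
            rw [hR]
            simp
          have key : sqSteps (t + 1) l = sqSteps t (l.drop (durfSq l)) := rfl
          rw [hm]
          constructor
          · intro h0
            by_cases hc : sqSteps t l = []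
            · exact Or.inl hc
            · refine Or.inr ⟨key.trans h0, hc, 1, le_refl 1, by omega, ?_⟩
              have e : sqSteps (1 - 1) l = l := rfl
              rw [e]
              exact hgt
          · rintro (h0 | ⟨h0, -, -⟩)
            · have := sqSteps_eq_nil_succ h0
              rwa [key] at this
            · rwa [key] at h0

end Helpers

/-- Lemma 5.3 of the paper: `𝓐''_r(n) = 𝓓_{r,r−1}(n)`. Here `𝓐''_r(n)` is the union of
`𝓐_{r−1,r−1}(n)` (partitions of `n` with at most `r−2` successive Durfee squares) with
`𝓐'_r(n)`, the set of partitions of `n` with exactly `r−1` successive Durfee squares such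
that for some `j` the part `λ_{n_1+⋯+n_j}` at the bottom row of the `j`-th Durfee square
strictly exceeds the size `n_j` of that square; and `𝓓_{r,r−1}(n)` is the set of partitions
of `n` with one horizontal Durfee rectangle followed by at most `r−2` Durfee squares and
nothing below. -/
theorem Adoubleprime_eq_D (r n : ℕ) (hr : 2 ≤ r) :
    {l : List ℕ | IsPartitionOf n l ∧
        (sqSteps (r - 2) l = [] ∨
          (sqSteps (r - 1) l = [] ∧ sqSteps (r - 2) l ≠ [] ∧
            ∃ j, 1 ≤ j ∧ j ≤ r - 1 ∧
              durfSq (sqSteps (j - 1) l) <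
                (sqSteps (j - 1) l).getD (durfSq (sqSteps (j - 1) l) - 1) 0))} =
    {l : List ℕ | IsPartitionOf n l ∧
        sqSteps (r - 2) (l.drop (durfRectH l - 1)) = []} := by
  ext l
  simp only [Set.mem_setOf_eq]
  refine and_congr_right fun hp => ?_
  rw [show r - 1 = (r - 2) + 1 by omega]
  exact (main_iff l.length l (le_refl _) hp.1 hp.2.1 (r - 2)).symm
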